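/- Perfect privacy preservation: Suppose the underlying secret sharing scheme (Sh, Rc) with access structure 𝔸 is perfectly private, i.e., for any non-qualified set A ∉ 𝔸, the joint distribution of shares (X_i)_{i∈A} is independent of the secret S. Then the transformed scheme of Protocol 1 is also perfectly private: for any non-qualified set A, the joint distribution of all data held by players in A — their original shares, masks, Toeplitz matrices, and tags — is independent of S. -/

import Mathlib

open Finset
open scoped ENNReal

/-- The `n × m` Toeplitz matrix over `F` determined by the vector
`s ∈ F^(n+m-1)` giving its first column (bottom to top: `T (n-1) 0 = s 0`, ..., `T 0 0 = s (n-1)`)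
and first row (`T 0 j = s (n-1+j)`); it satisfies `T i j = T (i-1) (j-1)`. -/
def toeplitz {F : Type*} (n m : ℕ) (s : Fin (n + m - 1) → F) :
    Matrix (Fin n) (Fin m) F :=
  fun i j => s ⟨n - 1 - i.1 + j.1, by have h1 := i.2; have h2 := j.2; omega⟩

lemma uniform_map_equiv {α : Type*} [Fintype α] [Nonempty α] (e : α ≃ α) :
    (PMF.uniformOfFintype α).map e = PMF.uniformOfFintype α := by
  ext b
  rw [PMF.map_apply]
  rw [tsum_eq_single (e.symm b) (fun a ha => by
    rw [if_neg]
    intro hb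
    exact ha (by simp [hb]))]
  simp

set_option maxHeartbeats 1000000 in
set_option synthInstance.maxHeartbeats 400000 in
/-- Perfect privacy preservation: if the underlying scheme `Sh` is perfectly private (for any
non-qualified set `A`, the joint distribution of the shares `(X_j)_{j ∈ A}` does not depend
on the secret), then the transformed scheme of Protocol 1 is perfectly private: for any
non-qualified `A`, the joint distribution of all data held by players in `A` — original
shares `X_j`, masks `Z_{i,j}`, Toeplitz keys, and tags `Y_{j,i} = T_j X_i + Z_{j,i}` — does
not depend on the secret. -/
theorem stmt10 (F : Type*) [Field F] [Fintype F] (n m ℓ : ℕ)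
    (Secret : Type*) (Sh : Secret → PMF (Fin n → Fin m → F))
    (Acc : Finset (Fin n) → Prop)
    (hpriv : ∀ A : Finset (Fin n), ¬ Acc A → ∀ s s' : Secret,
      (Sh s).map (fun X => fun j : A => X j.1) =
        (Sh s').map (fun X => fun j : A => X j.1)) :
    ∀ A : Finset (Fin n), ¬ Acc A → ∀ s s' : Secret,
      ((Sh s).bind fun X =>
        (PMF.uniformOfFintype
            ((Fin n → Fin n → Fin ℓ → F) × (Fin n → Fin (ℓ + m - 1) → F))).map
          (fun zk => fun j : A =>
            (X j.1, fun i => zk.1 i j.1, zk.2 j.1,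
              fun i => (toeplitz ℓ m (zk.2 j.1)).mulVec (X i) + zk.1 j.1 i)))
      = ((Sh s').bind fun X =>
        (PMF.uniformOfFintype
            ((Fin n → Fin n → Fin ℓ → F) × (Fin n → Fin (ℓ + m - 1) → F))).map
          (fun zk => fun j : A =>
            (X j.1, fun i => zk.1 i j.1, zk.2 j.1,
              fun i => (toeplitz ℓ m (zk.2 j.1)).mulVec (X i) + zk.1 j.1 i))) := by
  intro A hA s s'
  classical
  set α := (Fin n → Fin n → Fin ℓ → F) × (Fin n → Fin (ℓ + m - 1) → F) with hαdef
  set out : (Fin n → Fin m → F) → α →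
      ((j : A) → (Fin m → F) × (Fin n → Fin ℓ → F) × (Fin (ℓ + m - 1) → F) ×
        (Fin n → Fin ℓ → F)) :=
    fun X zk => fun j : A =>
      (X j.1, fun i => zk.1 i j.1, zk.2 j.1,
        fun i => (toeplitz ℓ m (zk.2 j.1)).mulVec (X i) + zk.1 j.1 i) with houtdef
  have key : ∀ X X' : Fin n → Fin m → F, (∀ j ∈ A, X j = X' j) →
      (PMF.uniformOfFintype α).map (out X) = (PMF.uniformOfFintype α).map (out X') := by
    intro X X' hXX
    let φ : α ≃ α :=
    { toFun := fun zk =>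
        (fun a b => if b ∈ A then zk.1 a b else
          zk.1 a b + (toeplitz ℓ m (zk.2 a)).mulVec (X b)
            - (toeplitz ℓ m (zk.2 a)).mulVec (X' b), zk.2)
      invFun := fun zk =>
        (fun a b => if b ∈ A then zk.1 a b else
          zk.1 a b + (toeplitz ℓ m (zk.2 a)).mulVec (X' b)
            - (toeplitz ℓ m (zk.2 a)).mulVec (X b), zk.2)
      left_inv := by
        intro zk
        refine Prod.ext ?_ rfl
        funext a b
        by_cases hb : b ∈ A <;> simp [hb]
      right_inv := by
        intro zk
        refine Prod.ext ?_ rfl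
        funext a b
        by_cases hb : b ∈ A <;> simp [hb] }
    have hcomp : out X = (out X') ∘ φ := by
      funext zk
      funext j
      show (_, _, _, _) = (_, _, _, _)
      have hXj : X j.1 = X' j.1 := hXX j.1 j.2
      refine Prod.ext (hXj) (Prod.ext ?_ (Prod.ext rfl ?_))
      · funext i
        show zk.1 i j.1 = if (j.1 : Fin n) ∈ A then zk.1 i j.1 else _
        rw [if_pos j.2]
      · funext i
        show (toeplitz ℓ m (zk.2 j.1)).mulVec (X i) + zk.1 j.1 i
          = (toeplitz ℓ m (zk.2 j.1)).mulVec (X' i) +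
            (if i ∈ A then zk.1 j.1 i else
              zk.1 j.1 i + (toeplitz ℓ m (zk.2 j.1)).mulVec (X i)
                - (toeplitz ℓ m (zk.2 j.1)).mulVec (X' i))
        by_cases hi : i ∈ A
        · rw [if_pos hi, hXX i hi]
        · rw [if_neg hi]
          abel
    rw [hcomp, ← PMF.map_comp, uniform_map_equiv]
  have hbind : ∀ t : Secret,
      ((Sh t).bind fun X => (PMF.uniformOfFintype α).map (out X))
      = ((Sh t).map (fun X => fun j : A => X j.1)).bind
          (fun x => (PMF.uniformOfFintype α).map
            (out (fun i => if h : i ∈ A then x ⟨i, h⟩ else 0))) := by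
    intro t
    rw [PMF.bind_map]
    congr 1
    funext X
    show _ = PMF.map (out fun i => if h : i ∈ A then (fun j : A => X j.1) ⟨i, h⟩ else 0) (PMF.uniformOfFintype α)
    exact key X (fun i => if h : i ∈ A then (fun j : A => X j.1) ⟨i, h⟩ else 0) (fun j hj => by show X j = if h : j ∈ A then X j else 0; rw [dif_pos hj])
  show ((Sh s).bind fun X => (PMF.uniformOfFintype α).map (out X))
    = ((Sh s').bind fun X => (PMF.uniformOfFintype α).map (out X))
  rw [hbind s, hbind s', hpriv A hA s s']
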